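/- Let A be an index set and let X be a mean-zero random variable on each probability space (Ω_α, F_α, P_α), α ∈ A. Suppose X satisfies the Bernstein condition A-uniformly with parameter b̄ > 0, i.e. for every α ∈ A and integer k ≥ 3, E_{P_α}|X|^k ≤ (k!/2)·b̄^{k−2}·Var_{P_α}(X). Then X is (λ̲, A)-Sakhanenko regular with λ̲ = 1/(7·b̄), i.e. for every α ∈ A, (1/(7b̄))·E_{P_α}( |X|³·exp{|X|/(7b̄)} ) ≤ Var_{P_α}(X). -/

import Mathlib

open MeasureTheory ProbabilityTheory

private lemma cube_ineq (j : ℕ) :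
    ((j : ℝ) + 1) * ((j : ℝ) + 2) * ((j : ℝ) + 3) ≤ 6 * 4 ^ j := by
  induction j with
  | zero => norm_num
  | succ n ih =>
    have h4 : (0:ℝ) < 4 ^ n := by positivity
    push_cast [pow_succ] at *
    nlinarith [h4, ih]

/-- **From a uniform Bernstein condition to Sakhanenko regularity.**  Let `X` be mean-zero
on each `(Ω α, P α)` and suppose `X` satisfies the Bernstein condition `A`-uniformly with
parameter `b̄ > 0`: `E_{P α}|X|^k ≤ (k!/2) b̄^(k−2) Var_{P α}(X)` for every integer
`k ≥ 3`.  Then `X` is `(1/(7 b̄), A)`-Sakhanenko regular: for every `α`,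
`(1/(7 b̄)) · E_{P α}(|X|³ exp(|X|/(7 b̄))) ≤ Var_{P α}(X)`  (expectations of nonnegative
quantities are expressed as lower Lebesgue integrals). -/
theorem sakhanenko_regular_from_bernstein
    (A : Type*) (Ω : A → Type*) [∀ α, MeasurableSpace (Ω α)]
    (P : ∀ α, Measure (Ω α)) [∀ α, IsProbabilityMeasure (P α)]
    (X : ∀ α, Ω α → ℝ)
    (hmeas : ∀ α, Measurable (X α))
    (hmean : ∀ α, ∫ ω, X α ω ∂(P α) = 0)
    (b : ℝ) (hb : 0 < b)
    (hbern : ∀ α, ∀ k : ℕ, 3 ≤ k →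
      ∫⁻ ω, ENNReal.ofReal (|X α ω| ^ k) ∂(P α)
        ≤ ENNReal.ofReal ((Nat.factorial k : ℝ) / 2 * b ^ (k - 2)
            * variance (X α) (P α))) :
    ∀ α, ENNReal.ofReal (1 / (7 * b))
        * ∫⁻ ω, ENNReal.ofReal (|X α ω| ^ 3 * Real.exp (|X α ω| / (7 * b))) ∂(P α)
      ≤ ENNReal.ofReal (variance (X α) (P α)) := by
  intro α
  set V := variance (X α) (P α) with hVdef
  have hV0 : 0 ≤ V := variance_nonneg _ _
  set c : ℝ := 1 / (7 * b) with hc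
  have hc0 : 0 < c := by positivity
  -- summability of the expansion
  have hsum : ∀ t : ℝ, Summable (fun j : ℕ => c ^ j / (j.factorial : ℝ) * t ^ (j + 3)) := by
    intro t
    apply Summable.congr ((Real.summable_pow_div_factorial (t * c)).mul_left (t ^ 3))
    intro j
    rw [mul_pow, pow_add]
    ring
  -- pointwise series expansion
  have hexp : ∀ t : ℝ, t ^ 3 * Real.exp (t / (7 * b))
      = ∑' j : ℕ, c ^ j / (j.factorial : ℝ) * t ^ (j + 3) := by
    intro t
    have h1 : Real.exp (t / (7 * b)) = ∑' j : ℕ, (t * c) ^ j / (j.factorial : ℝ) := by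
      have : t / (7 * b) = t * c := by rw [hc]; ring
      rw [this, Real.exp_eq_exp_ℝ, NormedSpace.exp_eq_tsum_div]
    rw [h1, ← tsum_mul_left]
    exact tsum_congr fun j => by rw [mul_pow, pow_add]; ring
  have key : ∀ ω, ENNReal.ofReal (|X α ω| ^ 3 * Real.exp (|X α ω| / (7 * b)))
      = ∑' j : ℕ, ENNReal.ofReal (c ^ j / (j.factorial : ℝ) * |X α ω| ^ (j + 3)) := by
    intro ω
    rw [hexp (|X α ω|)]
    exact ENNReal.ofReal_tsum_of_nonneg (fun j => by positivity) (hsum _)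
  have hmeas' : ∀ j : ℕ, AEMeasurable
      (fun ω => ENNReal.ofReal (c ^ j / (j.factorial : ℝ) * |X α ω| ^ (j + 3))) (P α) :=
    fun j => ((((hmeas α).abs.pow_const _).const_mul _).ennreal_ofReal).aemeasurable
  rw [lintegral_congr key, lintegral_tsum hmeas', ← ENNReal.tsum_mul_left]
  -- bound each term of the sum
  have hterm : ∀ j : ℕ,
      ENNReal.ofReal c * ∫⁻ ω, ENNReal.ofReal (c ^ j / (j.factorial : ℝ) * |X α ω| ^ (j + 3)) ∂(P α)
        ≤ ENNReal.ofReal (3 * V / 7 * (4 / 7) ^ j) := by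
    intro j
    have hnn : 0 ≤ c ^ j / (j.factorial : ℝ) := by positivity
    have hI : ∫⁻ ω, ENNReal.ofReal (c ^ j / (j.factorial : ℝ) * |X α ω| ^ (j + 3)) ∂(P α)
        = ENNReal.ofReal (c ^ j / (j.factorial : ℝ))
          * ∫⁻ ω, ENNReal.ofReal (|X α ω| ^ (j + 3)) ∂(P α) := by
      simp_rw [ENNReal.ofReal_mul hnn]
      exact lintegral_const_mul _ ((hmeas α).abs.pow_const _).ennreal_ofReal
    have hb3 : ∫⁻ ω, ENNReal.ofReal (|X α ω| ^ (j + 3)) ∂(P α)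
        ≤ ENNReal.ofReal (((j + 3).factorial : ℝ) / 2 * b ^ (j + 1) * V) := by
      have := hbern α (j + 3) (by omega)
      have h32 : j + 3 - 2 = j + 1 := by omega
      rwa [h32] at this
    calc ENNReal.ofReal c * ∫⁻ ω, ENNReal.ofReal (c ^ j / (j.factorial : ℝ) * |X α ω| ^ (j + 3)) ∂(P α)
        ≤ ENNReal.ofReal c * (ENNReal.ofReal (c ^ j / (j.factorial : ℝ))
            * ENNReal.ofReal (((j + 3).factorial : ℝ) / 2 * b ^ (j + 1) * V)) := by
          rw [hI, ← mul_assoc, mul_assoc]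
          exact mul_le_mul_right (mul_le_mul_right hb3 _) _
      _ = ENNReal.ofReal (c * (c ^ j / (j.factorial : ℝ)
            * (((j + 3).factorial : ℝ) / 2 * b ^ (j + 1) * V))) := by
          rw [ENNReal.ofReal_mul hc0.le, ENNReal.ofReal_mul hnn]
      _ ≤ ENNReal.ofReal (3 * V / 7 * (4 / 7) ^ j) := by
          apply ENNReal.ofReal_le_ofReal
          have hfj : (0:ℝ) < (j.factorial : ℝ) := by
            exact_mod_cast j.factorial_pos
          have hfac : (((j + 3).factorial : ℝ))
              = (j.factorial : ℝ) * (((j:ℝ) + 1) * ((j:ℝ) + 2) * ((j:ℝ) + 3)) := by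
            rw [show j + 3 = (j + 2) + 1 from rfl, Nat.factorial_succ, Nat.factorial_succ,
              Nat.factorial_succ]
            push_cast
            ring
          have hcb : c * b = 1 / 7 := by
            rw [hc]; field_simp
          have hrw : c * (c ^ j / (j.factorial : ℝ)
              * (((j + 3).factorial : ℝ) / 2 * b ^ (j + 1) * V))
              = (c * b) ^ (j + 1) * (((j:ℝ) + 1) * ((j:ℝ) + 2) * ((j:ℝ) + 3)) / 2 * V := by
            rw [hfac]
            field_simp
            ring
          rw [hrw, hcb]
          have hp : (0:ℝ) ≤ (1/7:ℝ) ^ (j+1) := by positivity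
          have h1 := mul_le_mul_of_nonneg_right
            (mul_le_mul_of_nonneg_left (cube_ineq j) hp) hV0
          have h47 : ((4:ℝ)/7) ^ j = 4 ^ j * (1/7) ^ j := by
            rw [← mul_pow]; norm_num
          calc (1/7:ℝ) ^ (j+1) * (((j:ℝ) + 1) * ((j:ℝ) + 2) * ((j:ℝ) + 3)) / 2 * V
              = ((1/7:ℝ) ^ (j+1) * (((j:ℝ) + 1) * ((j:ℝ) + 2) * ((j:ℝ) + 3)) * V) / 2 := by
                ring
            _ ≤ ((1/7:ℝ) ^ (j+1) * (6 * 4 ^ j) * V) / 2 := by linarith [h1]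
            _ = 3 * V / 7 * (4 / 7) ^ j := by rw [h47, pow_succ]; ring
  refine (ENNReal.tsum_le_tsum hterm).trans ?_
  -- sum the geometric series
  have hg : ∀ j : ℕ, ENNReal.ofReal (3 * V / 7 * (4 / 7) ^ j)
      = ENNReal.ofReal (3 * V / 7) * ENNReal.ofReal (4 / 7) ^ j := by
    intro j
    rw [ENNReal.ofReal_mul (by positivity), ENNReal.ofReal_pow (by norm_num)]
  simp_rw [hg]
  rw [ENNReal.tsum_mul_left, ENNReal.tsum_geometric]
  have h17 : (1:ENNReal) - ENNReal.ofReal (4/7) = ENNReal.ofReal (3/7) := by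
    rw [← ENNReal.ofReal_one, ← ENNReal.ofReal_sub _ (by norm_num)]
    norm_num
  rw [h17, ← ENNReal.ofReal_inv_of_pos (by norm_num), ← ENNReal.ofReal_mul (by positivity)]
  apply ENNReal.ofReal_le_ofReal
  rw [(by norm_num : ((3:ℝ)/7)⁻¹ = 7/3)]
  exact le_of_eq (by ring)
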